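/- Let R be a commutative ring and S a multiplicative subset of R. If I is an S-primary ideal of R with I ∩ S = ∅, then the ideal S⁻¹I of the localization S⁻¹R (the pushforward of I along the canonical map R → S⁻¹R) is a primary ideal of S⁻¹R. -/

import Mathlib

/-- If `I` is an `S`-primary ideal of `R` disjoint from `S`, then `S⁻¹I` is a primary
ideal of the localization `S⁻¹R`. -/
theorem stmt_17 {R : Type*} [CommRing R] (S : Submonoid R) (I : Ideal R)
    (hdisj : (I : Set R) ∩ (S : Set R) = ∅)
    (hSprimary : ∃ s ∈ S, ∀ x y : R, x * y ∈ I → s * x ∈ I ∨ s * y ∈ I.radical) :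
    (I.map (algebraMap R (Localization S))).IsPrimary := by
  obtain ⟨s, hsS, hs⟩ := hSprimary
  rw [Ideal.isPrimary_iff]
  constructor
  · -- ≠ ⊤
    intro htop
    have h1 : (1 : Localization S) ∈ I.map (algebraMap R (Localization S)) := by
      rw [htop]; trivial
    rw [IsLocalization.mem_map_algebraMap_iff S (Localization S)] at h1
    obtain ⟨⟨i, v⟩, h⟩ := h1
    rw [one_mul] at h
    rw [IsLocalization.eq_iff_exists S] at h
    obtain ⟨c, hc⟩ := h
    have hmem : (c : R) * (v : R) ∈ (I : Set R) ∩ (S : Set R) := by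
      constructor
      · rw [hc]; exact I.mul_mem_left _ i.2
      · exact S.mul_mem c.2 v.2
    rw [hdisj] at hmem
    exact hmem
  · intro x y hxy
    obtain ⟨⟨a, t⟩, rfl⟩ := IsLocalization.mk'_surjective S x
    obtain ⟨⟨b, u⟩, rfl⟩ := IsLocalization.mk'_surjective S y
    rw [← IsLocalization.mk'_mul] at hxy
    rw [IsLocalization.mk'_mem_map_algebraMap_iff S] at hxy
    obtain ⟨w, hwS, hw⟩ := hxy
    have hw' : (w * a) * b ∈ I := by rwa [mul_assoc]
    rcases hs (w * a) b hw' with h1 | h2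
    · left
      rw [IsLocalization.mk'_mem_map_algebraMap_iff S]
      exact ⟨s * w, S.mul_mem hsS hwS, by rwa [mul_assoc]⟩
    · right
      obtain ⟨n, hn⟩ := h2
      refine ⟨n, ?_⟩
      rw [← IsLocalization.mk'_pow, IsLocalization.mk'_mem_map_algebraMap_iff S]
      exact ⟨s ^ n, S.pow_mem hsS n, by rwa [← mul_pow]⟩
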